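/- Let n ≥ 1, let B and A be symmetric real n×n matrices with B positive definite and A positive definite, let τ > 0 and σ ∈ ℝ. Assume the matrix B + (σ − 1/2) τ A is positive semidefinite. If vectors y, y' ∈ ℝⁿ satisfy the weighted scheme B((y' − y)/τ) + A(σ y' + (1−σ) y) = 0, then ‖y'‖_A ≤ ‖y‖_A, where ‖x‖_A = √(xᵀ A x). -/

import Mathlib

open Matrix

/-- The `A`-weighted norm `‖x‖_A = √(xᵀ A x)`. -/
noncomputable def normA {n : ℕ} (A : Matrix (Fin n) (Fin n) ℝ) (x : Fin n → ℝ) : ℝ :=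
  Real.sqrt (x ⬝ᵥ A *ᵥ x)

theorem weighted_scheme_stability_sufficiency
    {n : ℕ} (hn : 1 ≤ n)
    (B A : Matrix (Fin n) (Fin n) ℝ)
    (hB : B.PosDef) (hA : A.PosDef)
    (τ σ : ℝ) (hτ : 0 < τ)
    (hstab : (B + ((σ - 1 / 2) * τ) • A).PosSemidef)
    (y y' : Fin n → ℝ)
    (hscheme : B *ᵥ ((1 / τ) • (y' - y)) + A *ᵥ (σ • y' + (1 - σ) • y) = 0) :
    normA A y' ≤ normA A y := by
  set w := y' - y with hw
  -- symmetry of A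
  have hsymm : ∀ u v : Fin n → ℝ, u ⬝ᵥ A *ᵥ v = v ⬝ᵥ A *ᵥ u := by
    intro u v
    have hAT : Aᵀ = A := by
      have := hA.1.eq
      simpa [conjTranspose_eq_transpose_of_trivial] using this
    rw [dotProduct_mulVec, ← mulVec_transpose, hAT, dotProduct_comm]
  -- dot the scheme with w
  have h0 : w ⬝ᵥ (B *ᵥ ((1 / τ) • w) + A *ᵥ (σ • y' + (1 - σ) • y)) = 0 := by
    rw [hscheme]; simp
  have hexp : (1 / τ) * (w ⬝ᵥ B *ᵥ w)
      + σ * (w ⬝ᵥ A *ᵥ y') + (1 - σ) * (w ⬝ᵥ A *ᵥ y) = 0 := by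
    rw [← h0]
    simp [mulVec_add, mulVec_smul, dotProduct_add, dotProduct_smul, smul_eq_mul]
    ring
  -- stability quadratic form on w
  have hq : 0 ≤ w ⬝ᵥ B *ᵥ w + ((σ - 1 / 2) * τ) * (w ⬝ᵥ A *ᵥ w) := by
    have := hstab.dotProduct_mulVec_nonneg w
    simpa [add_mulVec, smul_mulVec, dotProduct_add, dotProduct_smul,
      smul_eq_mul] using this
  -- expand w ⬝ A ⬝ terms
  have hwAy' : w ⬝ᵥ A *ᵥ y' = y' ⬝ᵥ A *ᵥ y' - y ⬝ᵥ A *ᵥ y' := by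
    simp [hw, sub_dotProduct]
  have hwAy : w ⬝ᵥ A *ᵥ y = y' ⬝ᵥ A *ᵥ y - y ⬝ᵥ A *ᵥ y := by
    simp [hw, sub_dotProduct]
  have hwAw : w ⬝ᵥ A *ᵥ w = y' ⬝ᵥ A *ᵥ y' - 2 * (y ⬝ᵥ A *ᵥ y') + y ⬝ᵥ A *ᵥ y := by
    simp [hw, sub_dotProduct, mulVec_sub, dotProduct_sub]
    rw [hsymm y y']
    ring
  have hcross : y' ⬝ᵥ A *ᵥ y = y ⬝ᵥ A *ᵥ y' := hsymm y' y
  -- conclude y'ᵀAy' ≤ yᵀAy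
  have key : y' ⬝ᵥ A *ᵥ y' ≤ y ⬝ᵥ A *ᵥ y := by
    have hτ0 : τ ≠ 0 := ne_of_gt hτ
    have h1 : 1 / τ * (w ⬝ᵥ B *ᵥ w) = -(σ * (w ⬝ᵥ A *ᵥ y') + (1 - σ) * (w ⬝ᵥ A *ᵥ y)) := by
      linarith [hexp]
    have hBw : w ⬝ᵥ B *ᵥ w = τ * (-(σ * (w ⬝ᵥ A *ᵥ y') + (1 - σ) * (w ⬝ᵥ A *ᵥ y))) := by
      have h2 := congrArg (fun t => τ * t) h1
      simp only [← mul_assoc, mul_one_div_cancel hτ0, one_mul] at h2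
      exact h2
    rw [hwAy', hwAy] at hBw
    rw [hwAw, hBw, hcross] at hq
    nlinarith [hq, hτ]
  have hA' : 0 ≤ y' ⬝ᵥ A *ᵥ y' := by simpa using hA.posSemidef.dotProduct_mulVec_nonneg y'
  exact Real.sqrt_le_sqrt key
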